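/- Let q > 1 be a real number and δ ∈ ℂ. For every integer n ≥ 0, (1/(q+1)) times the integral over x ∈ [−2, 2] of X_n(x)·(1 + q^{1/2}·δ·x + q)·(q+1)/((q^{1/2}+q^{−1/2})² − x²)·√(4−x²)/(2π) with respect to Lebesgue measure equals 1 if n = 0, δ if n = 1, and 0 if n ≥ 2. -/

import Mathlib

/-- `X n` is the Satake transform of the characteristic function `f_n` of the double coset
`GL₂(ℤ_p) diag(p^n,1) GL₂(ℤ_p)`, viewed as a function of `x = q^s + q^{-s} = 2 cos θ`:
`X 0 = 1` and, for `n ≥ 1`,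
`X n (2 cos θ) = q^{n/2} (sin((n+1)θ) - q⁻¹ sin((n-1)θ)) / sin θ`,
expressed via Chebyshev polynomials of the second kind. -/
noncomputable def satakeX (q : ℝ) (n : ℕ) (x : ℝ) : ℝ :=
  if n = 0 then 1
  else (Real.sqrt q) ^ n *
    ((Polynomial.Chebyshev.U ℝ (n : ℤ)).eval (x / 2) -
      q⁻¹ * (Polynomial.Chebyshev.U ℝ ((n : ℤ) - 2)).eval (x / 2))

open Real Filter intervalIntegral MeasureTheory Set Polynomial.Chebyshev

noncomputable def Dq (s θ : ℝ) : ℝ := (s + s⁻¹)^2 - (2*Real.cos θ)^2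

noncomputable def Iq (s : ℝ) (m : ℤ) : ℝ :=
  ∫ θ in (0:ℝ)..π, Real.sin ((m+1)*θ) * Real.sin θ / Dq s θ

section basic
variable {s : ℝ} (hs : 1 < s)
include hs

lemma s_pos : 0 < s := lt_trans one_pos hs
lemma sinv_lt : s⁻¹ < 1 := by
  rw [inv_lt_one_iff₀]; right; exact hs

lemma Dq_pos (θ : ℝ) : 0 < Dq s θ := by
  have h1 : Real.cos θ ≤ 1 := Real.cos_le_one θ
  have h2 : -1 ≤ Real.cos θ := Real.neg_one_le_cos θ
  have h3 : s * s⁻¹ = 1 := mul_inv_cancel₀ (s_pos hs).ne'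
  have h4 : s⁻¹ < 1 := sinv_lt hs
  unfold Dq
  nlinarith [sq_nonneg (s - s⁻¹), sq_nonneg (Real.cos θ)]

omit hs in
lemma Dq_cont : Continuous (Dq s) := by unfold Dq; continuity

lemma Iq_integrand_cont (m : ℤ) :
    Continuous (fun θ => Real.sin (((m:ℝ)+1)*θ) * Real.sin θ / Dq s θ) := by
  apply Continuous.div (by continuity) Dq_cont
  exact fun θ => (Dq_pos hs θ).ne'

end basic

lemma integral_cos_int (k : ℤ) :
    (∫ θ in (0:ℝ)..π, Real.cos ((k:ℝ)*θ)) = if k = 0 then π else 0 := by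
  by_cases hk : k = 0
  · simp [hk]
  have hk' : (k:ℝ) ≠ 0 := Int.cast_ne_zero.mpr hk
  have hderiv : ∀ x ∈ Set.uIcc (0:ℝ) π, HasDerivAt (fun θ => Real.sin ((k:ℝ)*θ) / k)
      (Real.cos ((k:ℝ)*x)) x := by
    intro x _
    have h1 : HasDerivAt (fun θ : ℝ => (k:ℝ)*θ) (k:ℝ) x := by
      simpa using (hasDerivAt_id x).const_mul (k:ℝ)
    have h2 := (Real.hasDerivAt_sin ((k:ℝ)*x)).comp x h1
    have h3 := h2.div_const (k:ℝ)
    refine h3.congr_deriv ?_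
    field_simp
  rw [intervalIntegral.integral_eq_sub_of_hasDerivAt hderiv (by
    apply Continuous.intervalIntegrable; continuity)]
  simp only [mul_zero, Real.sin_zero, zero_div, sub_zero, if_neg hk]
  have : Real.sin ((k:ℝ)*π) = 0 := by exact_mod_cast Real.sin_int_mul_pi k
  rw [this, zero_div]

lemma integral_sin_mul_sin_val (m : ℤ) :
    (∫ θ in (0:ℝ)..π, Real.sin (((m:ℝ)+1)*θ) * Real.sin θ)
      = if m = 0 then π/2 else if m = -2 then -(π/2) else 0 := by
  have key : ∀ θ : ℝ, Real.sin (((m:ℝ)+1)*θ) * Real.sin θ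
      = (Real.cos ((m:ℝ)*θ) - Real.cos ((((m+2:ℤ)):ℝ)*θ))/2 := by
    intro θ
    have h1 : (m:ℝ)*θ = ((m:ℝ)+1)*θ - θ := by ring
    have h2 : (((m+2:ℤ)):ℝ)*θ = ((m:ℝ)+1)*θ + θ := by push_cast; ring
    rw [h1, h2, Real.cos_sub, Real.cos_add]; ring
  have hint : ∀ k : ℤ, IntervalIntegrable (fun θ => Real.cos ((k:ℝ)*θ)) volume 0 π := by
    intro k; apply Continuous.intervalIntegrable; continuity
  rw [intervalIntegral.integral_congr (fun θ _ => key θ), intervalIntegral.integral_div,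
    intervalIntegral.integral_sub (hint m) (hint (m+2)), integral_cos_int, integral_cos_int]
  by_cases h0 : m = 0
  · subst h0; norm_num
  by_cases h2 : m = -2
  · subst h2; norm_num; ring
  rw [if_neg h0, if_neg (by omega : m + 2 ≠ 0), if_neg h0, if_neg h2]
  norm_num

section K
variable {s : ℝ} (hs : 1 < s)
include hs

lemma K_integral :
    (∫ θ in (0:ℝ)..π, 1 / Dq s θ) = π / ((s + s⁻¹) * (s - s⁻¹)) := by
  have hs0 : (0:ℝ) < s := s_pos hs
  have hsi : s⁻¹ < 1 := sinv_lt hs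
  have hsipos : 0 < s⁻¹ := inv_pos.mpr hs0
  set a := s + s⁻¹ with ha_def
  set c := s - s⁻¹ with hc_def
  have ha : 0 < a := by positivity
  have hc : 0 < c := by simp only [hc_def]; linarith
  have hca : 0 < c / a := div_pos hc ha
  set F : ℝ → ℝ := fun θ => -(1/(a*c)) * Real.arctan ((c/a) * (Real.cos θ / Real.sin θ)) with hF
  have hderiv : ∀ θ ∈ Set.Ioo (0:ℝ) π, HasDerivAt F (1 / Dq s θ) θ := by
    intro θ hθ
    have hsin : 0 < Real.sin θ := Real.sin_pos_of_pos_of_lt_pi hθ.1 hθ.2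
    have hcot : HasDerivAt (fun θ => Real.cos θ / Real.sin θ)
        ((-Real.sin θ * Real.sin θ - Real.cos θ * Real.cos θ) / (Real.sin θ)^2) θ :=
      (Real.hasDerivAt_cos θ).div (Real.hasDerivAt_sin θ) hsin.ne'
    have hinner := hcot.const_mul (c/a)
    have harc := (Real.hasDerivAt_arctan ((c/a) * (Real.cos θ / Real.sin θ))).comp θ hinner
    have hfull := harc.const_mul (-(1/(a*c)))
    refine hfull.congr_deriv ?_
    have hD := (Dq_pos hs θ).ne'
    have hpy : Real.cos θ ^ 2 = 1 - Real.sin θ ^ 2 := by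
      have := Real.sin_sq_add_cos_sq θ; linarith
    have hac : a^2 - c^2 = 4 := by
      have h3 : s * s⁻¹ = 1 := mul_inv_cancel₀ hs0.ne'
      simp only [ha_def, hc_def]; nlinarith
    have hDval : Dq s θ = a^2 * Real.sin θ^2 + c^2 * Real.cos θ^2 := by
      unfold Dq
      rw [← ha_def]; nlinarith [Real.sin_sq_add_cos_sq θ]
    have hnum : -Real.sin θ * Real.sin θ - Real.cos θ * Real.cos θ = -1 := by nlinarith [hpy]
    rw [hnum, hDval]
    have hden : (0:ℝ) < a^2 * Real.sin θ^2 + c^2 * Real.cos θ^2 := by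
      rw [← hDval]; exact Dq_pos hs θ
    have h1 : (1:ℝ) + (c / a * (Real.cos θ / Real.sin θ))^2 ≠ 0 := by positivity
    field_simp
  have hcont : Continuous (fun θ => 1 / Dq s θ) := by
    apply Continuous.div continuous_const Dq_cont
    exact fun θ => (Dq_pos hs θ).ne'
  -- limit at 0⁺
  have hsin0 : Tendsto Real.sin (nhdsWithin 0 (Set.Ioi 0)) (nhdsWithin 0 (Set.Ioi 0)) := by
    apply tendsto_nhdsWithin_of_tendsto_nhds_of_eventually_within
    · have h : Tendsto Real.sin (nhdsWithin 0 (Set.Ioi 0)) (nhds (Real.sin 0)) :=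
        (Real.continuous_sin.tendsto 0).mono_left nhdsWithin_le_nhds
      simpa using h
    · filter_upwards [Ioo_mem_nhdsGT_of_mem (Set.left_mem_Ico.mpr Real.pi_pos)] with x hx
      exact Real.sin_pos_of_pos_of_lt_pi hx.1 hx.2
  have hcot0 : Tendsto (fun θ => Real.cos θ / Real.sin θ) (nhdsWithin 0 (Set.Ioi 0)) atTop := by
    simp only [div_eq_mul_inv]
    apply Filter.Tendsto.pos_mul_atTop one_pos
    · have h : Tendsto Real.cos (nhdsWithin 0 (Set.Ioi 0)) (nhds (Real.cos 0)) :=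
        (Real.continuous_cos.tendsto 0).mono_left nhdsWithin_le_nhds
      simpa using h
    · exact tendsto_inv_nhdsGT_zero.comp hsin0
  have hlim0 : Tendsto F (nhdsWithin 0 (Set.Ioi 0)) (nhds (-(1/(a*c)) * (π/2))) := by
    apply Tendsto.const_mul
    refine (Real.tendsto_arctan_atTop.mono_right nhdsWithin_le_nhds).comp ?_
    exact hcot0.const_mul_atTop hca
  -- limit at π⁻
  have hsinπ : Tendsto Real.sin (nhdsWithin π (Set.Iio π)) (nhdsWithin 0 (Set.Ioi 0)) := by
    apply tendsto_nhdsWithin_of_tendsto_nhds_of_eventually_within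
    · have h : Tendsto Real.sin (nhdsWithin π (Set.Iio π)) (nhds (Real.sin π)) :=
        (Real.continuous_sin.tendsto π).mono_left nhdsWithin_le_nhds
      simpa using h
    · filter_upwards [Ioo_mem_nhdsLT_of_mem (Set.right_mem_Ioc.mpr Real.pi_pos)] with x hx
      exact Real.sin_pos_of_pos_of_lt_pi hx.1 hx.2
  have hcotπ : Tendsto (fun θ => Real.cos θ / Real.sin θ) (nhdsWithin π (Set.Iio π)) atBot := by
    simp only [div_eq_mul_inv]
    apply Filter.Tendsto.neg_mul_atTop (by norm_num : (-1:ℝ) < 0)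
    · have h : Tendsto Real.cos (nhdsWithin π (Set.Iio π)) (nhds (Real.cos π)) :=
        (Real.continuous_cos.tendsto π).mono_left nhdsWithin_le_nhds
      simpa using h
    · exact tendsto_inv_nhdsGT_zero.comp hsinπ
  have hlimπ : Tendsto F (nhdsWithin π (Set.Iio π)) (nhds (-(1/(a*c)) * (-(π/2)))) := by
    apply Tendsto.const_mul
    refine (Real.tendsto_arctan_atBot.mono_right nhdsWithin_le_nhds).comp ?_
    exact hcotπ.const_mul_atBot hca
  rw [intervalIntegral.integral_eq_sub_of_hasDerivAt_of_tendsto Real.pi_pos hderiv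
    (hcont.intervalIntegrable 0 π) hlim0 hlimπ]
  have hac0 : a * c ≠ 0 := by positivity
  field_simp
  ring

end K

section Ivals
variable {s : ℝ} (hs : 1 < s)
include hs

lemma Iq_zero : Iq s 0 = π / (2*(s^2+1)) := by
  have hs0 : (0:ℝ) < s := s_pos hs
  unfold Iq
  rw [intervalIntegral.integral_congr (g := fun θ =>
      1/4 + ((4-(s+s⁻¹)^2)/4) * (1/Dq s θ)) (fun θ _ => by
    have hD := (Dq_pos hs θ).ne'
    have hpy := Real.sin_sq_add_cos_sq θ
    have hDval : Dq s θ = (s+s⁻¹)^2 - (2*Real.cos θ)^2 := rfl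
    have h5 : Real.sin (((0:ℤ):ℝ)+1) * θ |> Real.sin |> (fun _ => True) := trivial
    push_cast
    norm_num
    have h6 : Real.sin θ * Real.sin θ = Dq s θ/4 + (4-(s+s⁻¹)^2)/4 := by
      rw [hDval]; linear_combination hpy
    rw [h6]
    field_simp)]
  have hK := K_integral hs
  have hint : IntervalIntegrable (fun θ => 1 / Dq s θ) volume 0 π := by
    apply Continuous.intervalIntegrable
    exact Continuous.div continuous_const Dq_cont (fun θ => (Dq_pos hs θ).ne')
  rw [intervalIntegral.integral_add (intervalIntegrable_const) (hint.const_mul _),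
    intervalIntegral.integral_const_mul, hK]
  simp only [intervalIntegral.integral_const, smul_eq_mul, sub_zero]
  have h1 : s ≠ 0 := hs0.ne'
  have h2 : s - s⁻¹ ≠ 0 := by
    have : s⁻¹ < 1 := sinv_lt hs
    intro h; nlinarith
  have h3 : s + s⁻¹ ≠ 0 := by positivity
  have h4 : (2:ℝ)*(s^2+1) ≠ 0 := by positivity
  have h6 : (1:ℝ) < s^2 := by nlinarith
  have h7 : (0:ℝ) < s^4 - 1 := by nlinarith
  have hprod : (s+s⁻¹)*(s-s⁻¹) = (s^4-1)/s^2 := by field_simp; ring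
  rw [eq_div_iff h4, hprod, div_div_eq_mul_div]
  field_simp [h7.ne']
  ring

omit hs in
lemma Iq_one : Iq s 1 = 0 := by
  unfold Iq
  set f : ℝ → ℝ := fun θ => Real.sin (((1:ℤ):ℝ)+1) * θ |> fun _ => (0:ℝ) with hjunk
  clear hjunk f
  have hrefl := intervalIntegral.integral_comp_sub_left
    (fun θ => Real.sin ((((1:ℤ):ℝ)+1)*θ) * Real.sin θ / Dq s θ) π (a := 0) (b := π)
  simp only [sub_self, sub_zero] at hrefl
  have hneg : ∀ θ : ℝ, Real.sin ((((1:ℤ):ℝ)+1)*(π - θ)) * Real.sin (π - θ) / Dq s (π - θ)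
      = -(Real.sin ((((1:ℤ):ℝ)+1)*θ) * Real.sin θ / Dq s θ) := by
    intro θ
    have h1 : (((1:ℤ):ℝ)+1)*(π - θ) = 2*π - 2*θ := by push_cast; ring
    have h2 : Real.sin (2*π - 2*θ) = -Real.sin (2*θ) := by
      rw [Real.sin_sub, Real.sin_two_pi, Real.cos_two_pi]; ring
    have h3 : Dq s (π - θ) = Dq s θ := by
      unfold Dq; rw [Real.cos_pi_sub]; ring
    rw [h1, h2, h3, Real.sin_pi_sub]
    push_cast
    ring
  rw [intervalIntegral.integral_congr (fun θ _ => hneg θ), intervalIntegral.integral_neg] at hrefl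
  linarith

omit hs in
lemma Iq_neg_one : Iq s (-1) = 0 := by
  unfold Iq
  norm_num

omit hs in
lemma Iq_neg_two : Iq s (-2) = -Iq s 0 := by
  unfold Iq
  rw [← intervalIntegral.integral_neg]
  apply intervalIntegral.integral_congr
  intro θ _
  push_cast
  norm_num
  rw [neg_div]

end Ivals

section Rec
variable {s : ℝ} (hs : 1 < s)
include hs

lemma Iq_rec (m : ℤ) : Iq s (m+2) = ((s+s⁻¹)^2 - 2) * Iq s m - Iq s (m-2)
    - (if m = 0 then π/2 else if m = -2 then -(π/2) else 0) := by
  have hint : ∀ k : ℤ, IntervalIntegrable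
      (fun θ => Real.sin (((k:ℝ)+1)*θ) * Real.sin θ / Dq s θ) volume 0 π :=
    fun k => (Iq_integrand_cont hs k).intervalIntegrable 0 π
  have hintE : IntervalIntegrable
      (fun θ => Real.sin (((m:ℝ)+1)*θ) * Real.sin θ) volume 0 π := by
    apply Continuous.intervalIntegrable; continuity
  have hIq : Iq s (m+2) = ∫ θ in (0:ℝ)..π,
      (((s+s⁻¹)^2 - 2) * (Real.sin (((m:ℝ)+1)*θ) * Real.sin θ / Dq s θ)
        - Real.sin (((((m-2:ℤ)):ℝ)+1)*θ) * Real.sin θ / Dq s θ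
        - Real.sin (((m:ℝ)+1)*θ) * Real.sin θ) := by
    unfold Iq
    apply intervalIntegral.integral_congr
    intro θ _
    dsimp only
    have hD := (Dq_pos hs θ).ne'
    have hDval : Dq s θ = (s+s⁻¹)^2 - (2*Real.cos θ)^2 := rfl
    have e1 : ((((m+2:ℤ)):ℝ)+1)*θ = ((m:ℝ)+1)*θ + 2*θ := by push_cast; ring
    have e2 : ((((m-2:ℤ)):ℝ)+1)*θ = ((m:ℝ)+1)*θ - 2*θ := by push_cast; ring
    have h2θs : Real.sin (2*θ) = 2 * Real.sin θ * Real.cos θ := by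
      rw [two_mul, Real.sin_add]; ring
    have h2θc : Real.cos (2*θ) = 2 * Real.cos θ^2 - 1 := Real.cos_two_mul θ
    rw [e1, e2, Real.sin_add, Real.sin_sub, h2θs, h2θc]
    have hD' : (s+s⁻¹)^2 - (2*Real.cos θ)^2 ≠ 0 := hDval ▸ hD
    rw [hDval]
    generalize (s+s⁻¹)^2 = A at hD' ⊢
    linear_combination (-(Real.sin (((m:ℝ)+1)*θ) * Real.sin θ)) * mul_inv_cancel₀ hD'
  rw [hIq, intervalIntegral.integral_sub (((hint m).const_mul _).sub (hint (m-2))) hintE,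
    intervalIntegral.integral_sub ((hint m).const_mul _) (hint (m-2)),
    intervalIntegral.integral_const_mul, integral_sin_mul_sin_val]
  rfl

end Rec

lemma Iq_val {s : ℝ} (hs : 1 < s) : ∀ m : ℕ,
    Iq s m = if Even m then π/(2*(s^2+1)) * (s⁻¹)^m else 0 := by
  have hs0 : (0:ℝ) < s := s_pos hs
  have hrec : ∀ j : ℕ, Iq s ((j:ℤ)+2+2) = ((s+s⁻¹)^2-2) * Iq s ((j:ℤ)+2) - Iq s (j:ℤ) := by
    intro j
    have := Iq_rec hs ((j:ℤ)+2)
    rw [if_neg (by omega), if_neg (by omega)] at this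
    simpa using this
  intro m
  induction m using Nat.strong_induction_on with
  | _ m ih =>
    match m with
    | 0 => simpa using Iq_zero hs
    | 1 => simpa using Iq_one (s := s)
    | 2 =>
      have h := Iq_rec hs 0
      rw [show (0:ℤ)-2 = -2 by ring, Iq_neg_two (s := s), Iq_zero hs, if_pos rfl] at h
      rw [show ((2:ℕ):ℤ) = (0:ℤ)+2 by norm_num, h]
      have h1 : s ≠ 0 := hs0.ne'
      have h4 : (2:ℝ)*(s^2+1) ≠ 0 := by positivity
      simp only [even_two, if_pos]
      field_simp
      ring
    | 3 =>
      have h := Iq_rec hs 1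
      rw [show (1:ℤ)-2 = -1 by ring, if_neg (by omega), if_neg (by omega),
        Iq_neg_one (s := s), Iq_one (s := s)] at h
      rw [show ((3:ℕ):ℤ) = (1:ℤ)+2 by norm_num, h]
      norm_num [Nat.even_iff]
    | (j+4) =>
      have h := hrec j
      rw [show ((j:ℤ)+2+2) = ((j+4 : ℕ) : ℤ) by push_cast; ring,
        show ((j:ℤ)+2) = ((j+2 : ℕ) : ℤ) by push_cast; ring] at h
      rw [h, ih (j+2) (by omega), ih j (by omega)]
      have hpar : (Even (j+4) ↔ Even j) ∧ (Even (j+2) ↔ Even j) := by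
        constructor
        · rw [Nat.even_add]; simp [show Even 4 from by decide]
        · rw [Nat.even_add]; simp [show Even 2 from by decide]
      rcases Nat.even_or_odd j with hj | hj
      · rw [if_pos (hpar.1.mpr hj), if_pos (hpar.2.mpr hj), if_pos hj]
        have h1 : s ≠ 0 := hs0.ne'
        field_simp
        linear_combination ((s⁻¹)^j*(s^2 - (s⁻¹)^2)) * (by rw [← mul_pow, mul_inv_cancel₀ h1, one_pow] : s^2 * (s⁻¹)^2 = 1)
      · have hj' : ¬ Even j := Nat.not_even_iff_odd.mpr hj
        rw [if_neg (fun hc => hj' (hpar.1.mp hc)), if_neg (fun hc => hj' (hpar.2.mp hc)),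
          if_neg hj']
        ring

noncomputable def Wq (s x : ℝ) : ℝ :=
  (s^2+1)/((s + s⁻¹)^2 - x^2) * (Real.sqrt (4-x^2)/(2*π))

section Jsec
variable {s : ℝ} (hs : 1 < s)
include hs

lemma den_pos {x : ℝ} (hx : x ∈ Set.Icc (-2:ℝ) 2) : 0 < (s + s⁻¹)^2 - x^2 := by
  have h1 : s⁻¹ < 1 := sinv_lt hs
  have h2 : 0 < s⁻¹ := inv_pos.mpr (s_pos hs)
  have h3 : s * s⁻¹ = 1 := mul_inv_cancel₀ (s_pos hs).ne'
  have hx1 := hx.1; have hx2 := hx.2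
  nlinarith [sq_nonneg (s - s⁻¹)]

lemma Wq_contOn : ContinuousOn (Wq s) (Set.Icc (-2:ℝ) 2) := by
  apply ContinuousOn.mul
  · apply ContinuousOn.div continuousOn_const (by fun_prop)
    exact fun x hx => (den_pos hs hx).ne'
  · apply ContinuousOn.div (by fun_prop) continuousOn_const
    intro x _
    positivity

lemma JInt (m : ℤ) : IntervalIntegrable
    (fun x => ((Polynomial.Chebyshev.U ℝ m).eval (x/2)) * Wq s x) volume (-2) 2 := by
  apply ContinuousOn.intervalIntegrable
  rw [Set.uIcc_of_le (by norm_num : (-2:ℝ) ≤ 2)]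
  exact ((Polynomial.continuous _).comp (by fun_prop)).continuousOn.mul (Wq_contOn hs)

lemma Jq_eq (m : ℤ) :
    (∫ x in (-2:ℝ)..2, ((Polynomial.Chebyshev.U ℝ m).eval (x/2)) * Wq s x)
      = (2*(s^2+1)/π) * Iq s m := by
  have hπ := Real.pi_pos
  set g : ℝ → ℝ := fun x => ((Polynomial.Chebyshev.U ℝ m).eval (x/2)) * Wq s x with hg
  have hderivs : ∀ θ ∈ Set.uIcc (0:ℝ) π, HasDerivAt (fun θ => 2*Real.cos θ)
      (-2*Real.sin θ) θ := by
    intro θ _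
    have := (Real.hasDerivAt_cos θ).const_mul (2:ℝ)
    refine this.congr_deriv ?_; ring
  have himg : ((fun θ => 2*Real.cos θ) '' Set.uIcc (0:ℝ) π) ⊆ Set.Icc (-2:ℝ) 2 := by
    rintro x ⟨θ, _, rfl⟩
    dsimp only
    constructor
    · nlinarith [Real.neg_one_le_cos θ]
    · nlinarith [Real.cos_le_one θ]
  have hgcont : ContinuousOn g ((fun θ => 2*Real.cos θ) '' Set.uIcc (0:ℝ) π) := by
    apply ContinuousOn.mono _ himg
    exact ((Polynomial.continuous _).comp (by fun_prop)).continuousOn.mul (Wq_contOn hs)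
  have hsub := intervalIntegral.integral_comp_smul_deriv' (a := 0) (b := π) hderivs
    (by fun_prop) hgcont
  simp only [Function.comp_apply] at hsub
  rw [Real.cos_zero, Real.cos_pi, show (2:ℝ)*1 = 2 by norm_num,
    show (2:ℝ)*(-1) = -2 by norm_num] at hsub
  have h2 : (∫ x in (-2:ℝ)..2, g x) = - ∫ x in (2:ℝ)..(-2:ℝ), g x :=
    intervalIntegral.integral_symm 2 (-2)
  rw [h2, ← hsub, ← intervalIntegral.integral_neg]
  have hcong : ∀ θ ∈ Set.uIcc (0:ℝ) π,
      -((-2*Real.sin θ) • g (2*Real.cos θ))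
        = (2*(s^2+1)/π) * (Real.sin (((m:ℝ)+1)*θ) * Real.sin θ / Dq s θ) := by
    intro θ hθ
    rw [Set.uIcc_of_le Real.pi_pos.le] at hθ
    have hsin : 0 ≤ Real.sin θ := Real.sin_nonneg_of_nonneg_of_le_pi hθ.1 hθ.2
    have hpy := Real.sin_sq_add_cos_sq θ
    have hU := Polynomial.Chebyshev.U_real_cos θ m
    have hDne := (Dq_pos hs θ).ne'
    have hDval : Dq s θ = (s+s⁻¹)^2 - (2*Real.cos θ)^2 := rfl
    simp only [hg, smul_eq_mul, Wq]
    rw [show (2*Real.cos θ)/2 = Real.cos θ by ring,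
      show 4 - (2*Real.cos θ)^2 = (2*Real.sin θ)^2 by nlinarith,
      Real.sqrt_sq (by linarith : (0:ℝ) ≤ 2*Real.sin θ), ← hDval]
    field_simp
    linear_combination (Real.sin θ) * hU
  rw [intervalIntegral.integral_congr hcong, intervalIntegral.integral_const_mul]
  rfl

lemma Jq_val (m : ℕ) :
    (∫ x in (-2:ℝ)..2, ((Polynomial.Chebyshev.U ℝ (m:ℤ)).eval (x/2)) * Wq s x)
      = if Even m then (s⁻¹)^m else 0 := by
  rw [Jq_eq hs, Iq_val hs m]
  have hπ := Real.pi_pos.ne'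
  have h4 : (s^2+1) ≠ 0 := by positivity
  by_cases h : Even m
  · rw [if_pos h, if_pos h]
    field_simp
  · rw [if_neg h, if_neg h, mul_zero]

lemma Jq_neg_one :
    (∫ x in (-2:ℝ)..2, ((Polynomial.Chebyshev.U ℝ (-1:ℤ)).eval (x/2)) * Wq s x) = 0 := by
  rw [Jq_eq hs, Iq_neg_one (s := s), mul_zero]

end Jsec

lemma xU (m : ℤ) (x : ℝ) :
    x * (Polynomial.Chebyshev.U ℝ m).eval (x/2)
      = (Polynomial.Chebyshev.U ℝ (m+1)).eval (x/2)
        + (Polynomial.Chebyshev.U ℝ (m-1)).eval (x/2) := by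
  have h := Polynomial.Chebyshev.U_add_two ℝ (m-1)
  rw [show m-1+2 = m+1 by ring, show m-1+1 = m by ring] at h
  have h2 := congrArg (Polynomial.eval (x/2)) h
  simp only [Polynomial.eval_sub, Polynomial.eval_mul, Polynomial.eval_ofNat,
    Polynomial.eval_X] at h2
  rw [h2]; ring

section comb
variable {s : ℝ} (hs : 1 < s)
include hs

lemma int_comb2 (c d : ℝ) (i j : ℤ) :
    (∫ x in (-2:ℝ)..2, (c * ((Polynomial.Chebyshev.U ℝ i).eval (x/2) * Wq s x)
        + d * ((Polynomial.Chebyshev.U ℝ j).eval (x/2) * Wq s x)))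
      = c * (∫ x in (-2:ℝ)..2, (Polynomial.Chebyshev.U ℝ i).eval (x/2) * Wq s x)
        + d * (∫ x in (-2:ℝ)..2, (Polynomial.Chebyshev.U ℝ j).eval (x/2) * Wq s x) := by
  rw [intervalIntegral.integral_add ((JInt hs i).const_mul c) ((JInt hs j).const_mul d),
    intervalIntegral.integral_const_mul, intervalIntegral.integral_const_mul]

lemma int_comb4 (c1 c2 c3 c4 : ℝ) (i1 i2 i3 i4 : ℤ) :
    (∫ x in (-2:ℝ)..2, ((c1 * ((Polynomial.Chebyshev.U ℝ i1).eval (x/2) * Wq s x)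
        + c2 * ((Polynomial.Chebyshev.U ℝ i2).eval (x/2) * Wq s x))
        + (c3 * ((Polynomial.Chebyshev.U ℝ i3).eval (x/2) * Wq s x)
        + c4 * ((Polynomial.Chebyshev.U ℝ i4).eval (x/2) * Wq s x))))
      = (c1 * (∫ x in (-2:ℝ)..2, (Polynomial.Chebyshev.U ℝ i1).eval (x/2) * Wq s x)
        + c2 * (∫ x in (-2:ℝ)..2, (Polynomial.Chebyshev.U ℝ i2).eval (x/2) * Wq s x))
        + (c3 * (∫ x in (-2:ℝ)..2, (Polynomial.Chebyshev.U ℝ i3).eval (x/2) * Wq s x)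
        + c4 * (∫ x in (-2:ℝ)..2, (Polynomial.Chebyshev.U ℝ i4).eval (x/2) * Wq s x)) := by
  rw [intervalIntegral.integral_add
      (((JInt hs i1).const_mul c1).add ((JInt hs i2).const_mul c2))
      (((JInt hs i3).const_mul c3).add ((JInt hs i4).const_mul c4)),
    int_comb2 hs, int_comb2 hs]

end comb

lemma satakeX_cont (q : ℝ) (n : ℕ) : Continuous (satakeX q n) := by
  unfold satakeX
  split
  · exact continuous_const
  · apply Continuous.mul continuous_const
    exact ((Polynomial.continuous _).comp (by fun_prop)).sub
      (Continuous.mul continuous_const ((Polynomial.continuous _).comp (by fun_prop)))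

lemma pow_cancel {s : ℝ} (hs0 : s ≠ 0) (m : ℕ) : s^m * (s⁻¹)^m = 1 := by
  rw [← mul_pow, mul_inv_cancel₀ hs0, one_pow]

lemma R1_val {s : ℝ} (hs : 1 < s) (n : ℕ) :
    (∫ x in (-2:ℝ)..2, satakeX (s^2) n x * (1+s^2) * Wq s x)
      = if n = 0 then 1+s^2 else 0 := by
  have hs0 : (0:ℝ) < s := s_pos hs
  have hsq : Real.sqrt (s^2) = s := Real.sqrt_sq hs0.le
  match n with
  | 0 =>
    rw [intervalIntegral.integral_congr (g := fun x =>
        (1+s^2) * ((Polynomial.Chebyshev.U ℝ ((0:ℕ):ℤ)).eval (x/2) * Wq s x)) (fun x _ => by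
      simp [satakeX, Polynomial.Chebyshev.U_zero])]
    rw [intervalIntegral.integral_const_mul, Jq_val hs 0]
    norm_num
  | 1 =>
    rw [intervalIntegral.integral_congr (g := fun x =>
        ((1+s^2)*s) * ((Polynomial.Chebyshev.U ℝ ((1:ℕ):ℤ)).eval (x/2) * Wq s x)) (fun x _ => by
      have hm1 : (Polynomial.Chebyshev.U ℝ (((1:ℕ):ℤ) - 2)).eval (x/2) = 0 := by
        rw [show ((1:ℕ):ℤ) - 2 = -1 by norm_num, Polynomial.Chebyshev.U_neg_one,
          Polynomial.eval_zero]
      simp only [satakeX, if_neg (by norm_num : (1:ℕ) ≠ 0), hsq, hm1]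
      ring)]
    rw [intervalIntegral.integral_const_mul, Jq_val hs 1]
    norm_num [Nat.even_iff]
  | (k+2) =>
    rw [intervalIntegral.integral_congr (g := fun x =>
        ((1+s^2)*s^(k+2)) * ((Polynomial.Chebyshev.U ℝ ((k+2:ℕ):ℤ)).eval (x/2) * Wq s x)
          + (-((1+s^2)*s^(k+2)*(s^2)⁻¹))
            * ((Polynomial.Chebyshev.U ℝ ((k:ℕ):ℤ)).eval (x/2) * Wq s x)) (fun x _ => by
      simp only [satakeX, if_neg (Nat.succ_ne_zero _), hsq,
        show ((k+2:ℕ):ℤ) - 2 = ((k:ℕ):ℤ) by push_cast; ring]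
      ring)]
    rw [int_comb2 hs, Jq_val hs (k+2), Jq_val hs k, if_neg (Nat.succ_ne_zero _)]
    have hpar : Even (k+2) ↔ Even k := by rw [Nat.even_add]; simp [show Even 2 from by decide]
    rcases Nat.even_or_odd k with hk | hk
    · rw [if_pos (hpar.mpr hk), if_pos hk, ← inv_pow]
      ring
    · have hk' : ¬ Even k := Nat.not_even_iff_odd.mpr hk
      rw [if_neg (fun hc => hk' (hpar.mp hc)), if_neg hk']
      ring

lemma R2_val {s : ℝ} (hs : 1 < s) (n : ℕ) :
    (∫ x in (-2:ℝ)..2, satakeX (s^2) n x * s * x * Wq s x)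
      = if n = 1 then 1+s^2 else 0 := by
  have hs0 : (0:ℝ) < s := s_pos hs
  have hsq : Real.sqrt (s^2) = s := Real.sqrt_sq hs0.le
  have h3 : s ≠ 0 := hs0.ne'
  match n with
  | 0 =>
    rw [intervalIntegral.integral_congr (g := fun x =>
        s * ((Polynomial.Chebyshev.U ℝ ((1:ℕ):ℤ)).eval (x/2) * Wq s x)
          + s * ((Polynomial.Chebyshev.U ℝ (-1:ℤ)).eval (x/2) * Wq s x)) (fun x _ => by
      have hx := xU 0 x
      simp only [zero_add, zero_sub] at hx
      have h0 : satakeX (s^2) 0 x = 1 := by simp [satakeX]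
      have hu0 : (Polynomial.Chebyshev.U ℝ (0:ℤ)).eval (x/2) = 1 := by
        simp [Polynomial.Chebyshev.U_zero]
      rw [show ((1:ℕ):ℤ) = (1:ℤ) by norm_num, h0]
      linear_combination (s * Wq s x) * hx - (s * x * Wq s x) * hu0)]
    rw [int_comb2 hs, Jq_val hs 1, Jq_neg_one hs]
    norm_num [Nat.even_iff]
  | 1 =>
    rw [intervalIntegral.integral_congr (g := fun x =>
        (s*s) * ((Polynomial.Chebyshev.U ℝ ((2:ℕ):ℤ)).eval (x/2) * Wq s x)
          + (s*s) * ((Polynomial.Chebyshev.U ℝ ((0:ℕ):ℤ)).eval (x/2) * Wq s x)) (fun x _ => by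
      have hx := xU 1 x
      simp only [show (1:ℤ)+1 = 2 by norm_num, show (1:ℤ)-1 = 0 by norm_num] at hx
      have hm1 : (Polynomial.Chebyshev.U ℝ (-1:ℤ)).eval (x/2) = 0 := by
        rw [Polynomial.Chebyshev.U_neg_one, Polynomial.eval_zero]
      simp only [satakeX, if_neg (by norm_num : (1:ℕ) ≠ 0), hsq,
        show ((1:ℕ):ℤ) = (1:ℤ) by norm_num, show ((2:ℕ):ℤ) = (2:ℤ) by norm_num,
        show ((0:ℕ):ℤ) = (0:ℤ) by norm_num, show (1:ℤ)-2 = -1 by norm_num, hm1]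
      linear_combination (s * s * Wq s x) * hx)]
    rw [int_comb2 hs, Jq_val hs 2, Jq_val hs 0, if_pos rfl,
      if_pos (by decide : Even 2), if_pos (by decide : Even 0)]
    have hst : s * s⁻¹ = 1 := mul_inv_cancel₀ h3
    linear_combination (s*s⁻¹ + 1) * hst
  | (k+2) =>
    rw [intervalIntegral.integral_congr (g := fun x =>
        ((s^(k+3)) * ((Polynomial.Chebyshev.U ℝ ((k:ℤ)+3)).eval (x/2) * Wq s x)
          + (s^(k+3)) * ((Polynomial.Chebyshev.U ℝ ((k:ℤ)+1)).eval (x/2) * Wq s x))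
          + ((-(s^(k+3)*(s^2)⁻¹)) * ((Polynomial.Chebyshev.U ℝ ((k:ℤ)+1)).eval (x/2) * Wq s x)
          + (-(s^(k+3)*(s^2)⁻¹)) * ((Polynomial.Chebyshev.U ℝ ((k:ℤ)-1)).eval (x/2) * Wq s x)))
        (fun x _ => by
      have hx1 := xU ((k:ℤ)+2) x
      have hx2 := xU (k:ℤ) x
      simp only [satakeX, if_neg (Nat.succ_ne_zero _), hsq,
        show ((k+2:ℕ):ℤ) - 2 = ((k:ℕ):ℤ) by push_cast; ring,
        show ((k+2:ℕ):ℤ) = (k:ℤ)+2 by push_cast; ring,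
        show (k:ℤ)+2-2 = (k:ℤ) by ring]
      simp only [show (k:ℤ)+2+1 = (k:ℤ)+3 by ring, show (k:ℤ)+2-1 = (k:ℤ)+1 by ring] at hx1
      linear_combination (s^(k+2) * s * Wq s x) * hx1
        - (s^(k+2) * s * (s^2)⁻¹ * Wq s x) * hx2)]
    rw [int_comb4 hs, if_neg (by omega : ¬ k+2 = 1)]
    rcases Nat.even_or_odd k with hk | hk
    · -- k even: all indices odd, integrals vanish
      obtain ⟨l, rfl⟩ := hk
      rw [show ((l+l:ℕ):ℤ)+3 = ((2*l+3:ℕ):ℤ) by push_cast; ring,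
        show ((l+l:ℕ):ℤ)+1 = ((2*l+1:ℕ):ℤ) by push_cast; ring]
      rw [Jq_val hs (2*l+3), Jq_val hs (2*l+1)]
      rw [if_neg (by rw [Nat.even_iff]; omega),
        if_neg (by rw [Nat.even_iff]; omega)]
      rcases Nat.eq_zero_or_pos l with rfl | hl
      · rw [show ((0+0:ℕ):ℤ)-1 = (-1:ℤ) by norm_num, Jq_neg_one hs]
        ring
      · rw [show ((l+l:ℕ):ℤ)-1 = ((2*l-1:ℕ):ℤ) by
            push_cast [Nat.cast_sub (by omega : 1 ≤ 2*l)]; ring,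
          Jq_val hs (2*l-1), if_neg (by rw [Nat.even_iff]; omega)]
        ring
    · -- k odd
      obtain ⟨l, rfl⟩ := hk
      rw [show ((2*l+1:ℕ):ℤ)+3 = ((2*l+4:ℕ):ℤ) by push_cast; ring,
        show ((2*l+1:ℕ):ℤ)+1 = ((2*l+2:ℕ):ℤ) by push_cast; ring,
        show ((2*l+1:ℕ):ℤ)-1 = ((2*l:ℕ):ℤ) by push_cast; ring]
      rw [Jq_val hs (2*l+4), Jq_val hs (2*l+2), Jq_val hs (2*l),
        if_pos (by rw [Nat.even_iff]; omega),
        if_pos (by rw [Nat.even_iff]; omega),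
        if_pos (by rw [Nat.even_iff]; omega)]
      rw [← inv_pow]
      ring


/-- First identity of Corollary 5.2 evaluated on the Hecke basis `{f_n}`:
`(1/(q+1)) ∫ X_n(x) (1 + q^{1/2} δ x + q) dμ_q(x)` equals `1` if `n = 0`, `δ` if `n = 1`,
and `0` if `n ≥ 2`. -/
theorem ramified_measure_hecke_basis (q : ℝ) (hq : 1 < q) (δ : ℂ) (n : ℕ) :
    (1 / ((q : ℂ) + 1)) *
        ∫ x in (-2 : ℝ)..2,
          (satakeX q n x : ℂ) * (1 + (Real.sqrt q : ℂ) * δ * (x : ℂ) + (q : ℂ)) *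
            ((((q + 1) / ((Real.sqrt q + (Real.sqrt q)⁻¹) ^ 2 - x ^ 2)) : ℝ) : ℂ) *
            (((Real.sqrt (4 - x ^ 2) / (2 * Real.pi)) : ℝ) : ℂ) =
      if n = 0 then 1 else if n = 1 then δ else 0 := by
  have hq0 : (0:ℝ) ≤ q := by linarith
  set s := Real.sqrt q with hsdef
  have hs2 : s^2 = q := Real.sq_sqrt hq0
  have hs : 1 < s := by nlinarith [Real.sqrt_nonneg q]
  have hs0 : (0:ℝ) < s := s_pos hs
  rw [← hs2]
  have key : ∀ x:ℝ, ((satakeX (s^2) n x : ℝ) : ℂ) * (1 + (s:ℂ) * δ * (x:ℂ) + ((s^2:ℝ):ℂ)) *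
      ((((s^2 + 1) / ((s + s⁻¹) ^ 2 - x ^ 2)) : ℝ) : ℂ) *
      (((Real.sqrt (4 - x ^ 2) / (2 * π)) : ℝ) : ℂ)
      = ((satakeX (s^2) n x * (1+s^2) * Wq s x : ℝ) : ℂ)
        + δ * ((satakeX (s^2) n x * s * x * Wq s x : ℝ) : ℂ) := by
    intro x; unfold Wq; push_cast; ring
  rw [intervalIntegral.integral_congr (fun x _ => key x)]
  have hWc : ContinuousOn (Wq s) (Set.uIcc (-2:ℝ) 2) := by
    rw [Set.uIcc_of_le (by norm_num : (-2:ℝ) ≤ 2)]; exact Wq_contOn hs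
  have h1r : IntervalIntegrable (fun x => satakeX (s^2) n x * (1+s^2) * Wq s x)
      volume (-2) 2 :=
    (((satakeX_cont (s^2) n).continuousOn.mul continuousOn_const).mul hWc).intervalIntegrable
  have h2r : IntervalIntegrable (fun x => satakeX (s^2) n x * s * x * Wq s x)
      volume (-2) 2 :=
    (((((satakeX_cont (s^2) n).mul continuous_const).mul
      continuous_id).continuousOn).mul hWc).intervalIntegrable
  have h1c : IntervalIntegrable (fun x => ((satakeX (s^2) n x * (1+s^2) * Wq s x : ℝ):ℂ))
      volume (-2) 2 := by
    apply ContinuousOn.intervalIntegrable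
    exact Complex.continuous_ofReal.comp_continuousOn
      (((satakeX_cont (s^2) n).continuousOn.mul continuousOn_const).mul hWc)
  have h2c : IntervalIntegrable (fun x => ((satakeX (s^2) n x * s * x * Wq s x : ℝ):ℂ))
      volume (-2) 2 := by
    apply ContinuousOn.intervalIntegrable
    exact Complex.continuous_ofReal.comp_continuousOn
      ((((((satakeX_cont (s^2) n).mul continuous_const).mul
        continuous_id).continuousOn).mul hWc))
  rw [intervalIntegral.integral_add h1c (h2c.const_mul δ),
    intervalIntegral.integral_const_mul, integral_ofReal, integral_ofReal,
    R1_val hs n, R2_val hs n]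
  have hne : ((s:ℂ)^2 + 1) ≠ 0 := by
    intro hc
    have : ((s^2+1 : ℝ):ℂ) = 0 := by push_cast; linear_combination hc
    rw [Complex.ofReal_eq_zero] at this
    nlinarith
  match n with
  | 0 =>
    rw [if_pos rfl, if_neg (by norm_num), if_pos rfl]
    push_cast
    field_simp
    ring
  | 1 =>
    rw [if_neg (by norm_num), if_pos rfl, if_neg (by norm_num), if_pos rfl]
    push_cast
    field_simp
    ring
  | (k+2) =>
    rw [if_neg (by omega), if_neg (by omega), if_neg (by omega), if_neg (by omega)]
    push_cast
    ring
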